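/- Let S = (β, γ) be a standard symbol and let ι be the involution of Z(S) whose nontrivial orbits are the pairs of S (so ι fixes all other elements of Z(S)). Then C(S) equals the set of all symbols Σ = (β̃, γ̃) ∈ Sy(n,k,r) such that β̃ ∩ γ̃ = β ∩ γ, Z(Σ) = Z(S), and for each nontrivial orbit {z, z′} of ι one of z, z′ belongs to β̃ and the other to γ̃. -/

import Mathlib

namespace LM2003

open scoped BigOperators

/-- `(β, γ)` is a symbol in `Sy(n,k,r)`: two finite sets of integers contained in
`{1, …, n+1}`, of cardinalities `k+r` and `k` (rows are identified with the subsets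
they enumerate; strict increase is automatic). -/
def IsSymbol (n k r : ℕ) (β γ : Finset ℤ) : Prop :=
  β ⊆ Finset.Icc 1 ((n : ℤ) + 1) ∧ γ ⊆ Finset.Icc 1 ((n : ℤ) + 1) ∧
    β.card = k + r ∧ γ.card = k

/-- `(β,γ)` is standard: for each `i < |γ|`, the `i`-th smallest element of `β`
is `≤` the `i`-th smallest element of `γ`. -/
def IsStandard (β γ : Finset ℤ) : Prop :=
  ∀ i : ℕ, i < γ.card → (β.sort (· ≤ ·))[i]! ≤ (γ.sort (· ≤ ·))[i]!

/-- Accumulated data after level `l` of the recursive definition of `ψ`: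
the first component is `γ⁰ ∪ ⋯ ∪ γ^l` and the second is `ψ(γ⁰ ∪ ⋯ ∪ γ^l)`. -/
def psiAcc (β γ : Finset ℤ) : ℕ → Finset ℤ × Finset ℤ
  | 0 => (γ ∩ β, γ ∩ β)
  | l + 1 =>
    let p := psiAcc β γ l
    let g := (γ \ p.1).filter fun j => j - ((l : ℤ) + 1) ∈ β \ p.2
    (p.1 ∪ g, p.2 ∪ g.image fun j => j - ((l : ℤ) + 1))

/-- The level sets `γ^l` in the recursive definition of `ψ`. -/
def gammaL (β γ : Finset ℤ) : ℕ → Finset ℤ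
  | 0 => γ ∩ β
  | l + 1 =>
    (γ \ (psiAcc β γ l).1).filter fun j => j - ((l : ℤ) + 1) ∈ β \ (psiAcc β γ l).2

open Classical in
/-- The map `ψ` : for `j ∈ γ^l` it is `j ↦ j - l` (via the least such `l`),
and the identity elsewhere. -/
noncomputable def psiS (β γ : Finset ℤ) (j : ℤ) : ℤ :=
  if h : ∃ l, j ∈ gammaL β γ l then j - (Nat.find h : ℤ) else j

/-- The pairs of a (standard) symbol: the pairs `(j, ψ(j))` with `j ∈ γ` and `ψ(j) ≠ j`. -/
noncomputable def pairsS (β γ : Finset ℤ) : Finset (ℤ × ℤ) :=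
  (γ.filter fun j => psiS β γ j ≠ j).image fun j => (j, psiS β γ j)

/-- Exchanging, for every pair in `T`, the two members between the two rows of `(β,γ)`
(reordering of rows is automatic for sets). Pairs are written `(j, ψ j)` with `j` in the
bottom row `γ` and `ψ j` in the top row `β`. -/
def swapSymbol (β γ : Finset ℤ) (T : Finset (ℤ × ℤ)) : Finset ℤ × Finset ℤ :=
  ((β \ T.image Prod.snd) ∪ T.image Prod.fst,
   (γ \ T.image Prod.fst) ∪ T.image Prod.snd)

/-- The class `C(S)` of a standard symbol: all symbols obtained by permuting a subset
of its pairs. -/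
noncomputable def CSet (β γ : Finset ℤ) : Finset (Finset ℤ × Finset ℤ) :=
  (pairsS β γ).powerset.image (swapSymbol β γ)

/-- The Fock space `F(Λ)`: free `ℚ(v)`-module on the set of all symbols. -/
abbrev FF : Type := (Finset ℤ × Finset ℤ) →₀ RatFunc ℚ

/-- Standard basis vector `u_S`. -/
noncomputable def uS (S : Finset ℤ × Finset ℤ) : FF := Finsupp.single S 1

/-- The variable `v` of `K = ℚ(v)`. -/
noncomputable def vv : RatFunc ℚ := RatFunc.X

/-- Action of the Chevalley generator `f_j` on the standard basis vector `u_S`. -/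
noncomputable def fAct (j : ℤ) (S : Finset ℤ × Finset ℤ) : FF :=
  (if j ∈ S.2 ∧ j + 1 ∉ S.2 then uS (S.1, insert (j + 1) (S.2.erase j)) else 0) +
  (if j ∈ S.1 ∧ j + 1 ∉ S.1 then
      vv ^ ((if j ∈ S.2 then (1 : ℤ) else 0) - (if j + 1 ∈ S.2 then (1 : ℤ) else 0)) •
        uS (insert (j + 1) (S.1.erase j), S.2)
    else 0)

/-- The Chevalley generator `f_j` as a linear operator on `F`. -/
noncomputable def fLin (j : ℤ) : FF →ₗ[RatFunc ℚ] FF :=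
  Finsupp.lsum (RatFunc ℚ) fun S => LinearMap.toSpanSingleton (RatFunc ℚ) FF (fAct j S)

/-- Divided powers: `f_j^{(1)} = f_j`, `f_j^{(2)} = f_j² / (v + v⁻¹)`. -/
noncomputable def fDiv (j : ℤ) (m : ℕ) : FF →ₗ[RatFunc ℚ] FF :=
  if m = 2 then (vv + vv⁻¹)⁻¹ • (fLin j ∘ₗ fLin j) else fLin j

/-- `b_S = Σ_{Σ ∈ C(S)} v^{n(Σ)} u_Σ`, written as a sum over the subsets `T` of the
set of pairs of `S` (with `n(Σ) = |T|`). -/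
noncomputable def bS (β γ : Finset ℤ) : FF :=
  ∑ T ∈ (pairsS β γ).powerset, vv ^ T.card • uS (swapSymbol β γ T)

/-- `ι` is an involution of the finite set `Z`. -/
def IsInvolutionOn (Z : Finset ℤ) (ι : ℤ → ℤ) : Prop :=
  (∀ z ∈ Z, ι z ∈ Z) ∧ ∀ z ∈ Z, ι (ι z) = z

/-- `z < z'` are consecutive elements of `Z`. -/
def ConsecutiveIn (Z : Finset ℤ) (z z' : ℤ) : Prop :=
  z ∈ Z ∧ z' ∈ Z ∧ z < z' ∧ ∀ x ∈ Z, ¬(z < x ∧ x < z')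

/-- `r`-admissible involutions of a finite set `Z` of integers: `ι` is an involution of
`Z` with exactly `r` fixed points, and either `|Z| = r`, or there are two consecutive
elements `z < z'` of `Z` with `ι z = z'` whose removal again yields an `r`-admissible
involution. -/
inductive IsAdmissible (r : ℕ) : Finset ℤ → (ℤ → ℤ) → Prop
  | base (Z : Finset ℤ) (ι : ℤ → ℤ) (hinv : IsInvolutionOn Z ι)
      (hfix : (Z.filter fun z => ι z = z).card = r) (hcard : Z.card = r) :
      IsAdmissible r Z ι
  | step (Z : Finset ℤ) (ι : ℤ → ℤ) (z z' : ℤ) (hinv : IsInvolutionOn Z ι)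
      (hfix : (Z.filter fun w => ι w = w).card = r)
      (hcons : ConsecutiveIn Z z z') (hzz : ι z = z')
      (hrec : IsAdmissible r (Z \ {z, z'}) ι) :
      IsAdmissible r Z ι

/-- `c_j(S)`: number of occurrences of `j` among the entries of the symbol `(β,γ)`. -/
def contentS (β γ : Finset ℤ) (j : ℤ) : ℕ :=
  (if j ∈ β then 1 else 0) + (if j ∈ γ then 1 else 0)

variable {β γ : Finset ℤ}

lemma sort_rank {s : Finset ℤ} {j : ℤ} (hj : j ∈ s) :
    (s.sort (· ≤ ·))[(s.filter (fun x => x < j)).card]! = j := by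
  have hnd : (s.sort (· ≤ ·)).Nodup := s.sort_nodup _
  have hpw : (s.sort (· ≤ ·)).Pairwise (· < ·) := List.sortedLT_iff_pairwise.1 s.sortedLT_sort
  obtain ⟨m, hm, hLm⟩ := List.mem_iff_getElem.1 ((Finset.mem_sort (α := ℤ) (· ≤ ·)).2 hj)
  have hset : s.filter (fun x => x < j) = ((s.sort (· ≤ ·)).take m).toFinset := by
    ext x
    simp only [Finset.mem_filter, List.mem_toFinset, List.mem_take_iff_getElem]
    constructor
    · rintro ⟨hxs, hxj⟩
      obtain ⟨a, ha, hLa⟩ :=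
        List.mem_iff_getElem.1 ((Finset.mem_sort (α := ℤ) (· ≤ ·)).2 hxs)
      have ham : a < m := by
        rcases lt_trichotomy a m with h | h | h
        · exact h
        · exfalso; subst h; rw [hLm] at hLa; omega
        · exfalso
          have := List.pairwise_iff_getElem.1 hpw m a hm ha h
          rw [hLm, hLa] at this; omega
      exact ⟨a, by omega, hLa⟩
    · rintro ⟨a, ha, rfl⟩
      refine ⟨(Finset.mem_sort (α := ℤ) (· ≤ ·)).1 (List.getElem_mem _), ?_⟩
      have := List.pairwise_iff_getElem.1 hpw a m (by omega) hm (by omega)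
      rw [hLm] at this; exact this
  have hcard : (s.filter (fun x => x < j)).card = m := by
    rw [hset, List.toFinset_card_of_nodup (hnd.sublist (List.take_sublist m _)),
      List.length_take]
    omega
  rw [hcard, getElem!_pos (s.sort (· ≤ ·)) m hm, hLm]

lemma sort_card_le {s : Finset ℤ} {i : ℕ} (hi : i < s.card) {j : ℤ}
    (h : (s.sort (· ≤ ·))[i]! ≤ j) : i + 1 ≤ (s.filter (fun x => x ≤ j)).card := by
  have hnd : (s.sort (· ≤ ·)).Nodup := s.sort_nodup _
  have hpw : (s.sort (· ≤ ·)).Pairwise (· < ·) := List.sortedLT_iff_pairwise.1 s.sortedLT_sort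
  have hlen : (s.sort (· ≤ ·)).length = s.card := Finset.length_sort _
  have hi' : i < (s.sort (· ≤ ·)).length := by omega
  rw [getElem!_pos (s.sort (· ≤ ·)) i hi'] at h
  have hsub : ((s.sort (· ≤ ·)).take (i+1)).toFinset ⊆ s.filter (fun x => x ≤ j) := by
    intro x hx
    obtain ⟨a, ha, rfl⟩ := List.mem_take_iff_getElem.1 (List.mem_toFinset.1 hx)
    refine Finset.mem_filter.2
      ⟨(Finset.mem_sort (α := ℤ) (· ≤ ·)).1 (List.getElem_mem _), ?_⟩
    rcases eq_or_lt_of_le (show a ≤ i by omega) with heq | hlt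
    · subst heq; exact h
    · exact le_trans (le_of_lt (List.pairwise_iff_getElem.1 hpw a i (by omega) hi' hlt)) h
  have hcard : (((s.sort (· ≤ ·)).take (i+1)).toFinset).card = i + 1 := by
    rw [List.toFinset_card_of_nodup (hnd.sublist (List.take_sublist _ _)),
      List.length_take]
    omega
  calc i + 1 = (((s.sort (· ≤ ·)).take (i+1)).toFinset).card := hcard.symm
    _ ≤ _ := Finset.card_le_card hsub

lemma psiAcc_succ_fst (β γ : Finset ℤ) (l : ℕ) :
    (psiAcc β γ (l+1)).1 = (psiAcc β γ l).1 ∪ gammaL β γ (l+1) := rfl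

lemma psiAcc_succ_snd (β γ : Finset ℤ) (l : ℕ) :
    (psiAcc β γ (l+1)).2 =
      (psiAcc β γ l).2 ∪ (gammaL β γ (l+1)).image (fun j => j - ((l:ℤ)+1)) := rfl

lemma psiAcc_fst_mono (β γ : Finset ℤ) {a b : ℕ} (h : a ≤ b) :
    (psiAcc β γ a).1 ⊆ (psiAcc β γ b).1 := by
  induction b with
  | zero => obtain rfl : a = 0 := by omega
            exact Finset.Subset.refl _
  | succ b ih =>
      rcases Nat.lt_or_ge a (b+1) with h' | h'
      · rw [psiAcc_succ_fst]
        exact (ih (by omega)).trans Finset.subset_union_left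
      · obtain rfl : a = b + 1 := by omega
        exact Finset.Subset.refl _

lemma psiAcc_snd_mono (β γ : Finset ℤ) {a b : ℕ} (h : a ≤ b) :
    (psiAcc β γ a).2 ⊆ (psiAcc β γ b).2 := by
  induction b with
  | zero => obtain rfl : a = 0 := by omega
            exact Finset.Subset.refl _
  | succ b ih =>
      rcases Nat.lt_or_ge a (b+1) with h' | h'
      · rw [psiAcc_succ_snd]
        exact (ih (by omega)).trans Finset.subset_union_left
      · obtain rfl : a = b + 1 := by omega
        exact Finset.Subset.refl _

lemma gammaL_succ_shift {l : ℕ} {x : ℤ} (hx : x ∈ gammaL β γ (l+1)) :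
    x - ((l:ℤ)+1) ∈ β \ (psiAcc β γ l).2 := (Finset.mem_filter.1 hx).2

lemma gammaL_succ_not_fst {l : ℕ} {x : ℤ} (hx : x ∈ gammaL β γ (l+1)) :
    x ∉ (psiAcc β γ l).1 := (Finset.mem_sdiff.1 (Finset.mem_filter.1 hx).1).2

lemma gammaL_subset_gamma (l : ℕ) : gammaL β γ l ⊆ γ := by
  cases l with
  | zero => exact Finset.inter_subset_left
  | succ l => exact fun x hx => (Finset.mem_sdiff.1 (Finset.mem_filter.1 hx).1).1

lemma gammaL_subset_fst (l : ℕ) : gammaL β γ l ⊆ (psiAcc β γ l).1 := by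
  cases l with
  | zero => exact Finset.Subset.refl _
  | succ l => rw [psiAcc_succ_fst]; exact Finset.subset_union_right

lemma fst_subset_gamma (l : ℕ) : (psiAcc β γ l).1 ⊆ γ := by
  induction l with
  | zero => exact Finset.inter_subset_left
  | succ l ih =>
      rw [psiAcc_succ_fst]
      exact Finset.union_subset ih (gammaL_subset_gamma _)

lemma snd_subset_beta (l : ℕ) : (psiAcc β γ l).2 ⊆ β := by
  induction l with
  | zero => exact Finset.inter_subset_right
  | succ l ih =>
      rw [psiAcc_succ_snd]
      refine Finset.union_subset ih ?_
      intro x hx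
      obtain ⟨y, hy, rfl⟩ := Finset.mem_image.1 hx
      exact (Finset.mem_sdiff.1 (gammaL_succ_shift hy)).1

lemma inter_subset_snd (l : ℕ) : γ ∩ β ⊆ (psiAcc β γ l).2 :=
  psiAcc_snd_mono β γ (Nat.zero_le l)

lemma mem_fst_iff {l : ℕ} {x : ℤ} :
    x ∈ (psiAcc β γ l).1 ↔ ∃ m, m ≤ l ∧ x ∈ gammaL β γ m := by
  induction l with
  | zero =>
      exact ⟨fun h => ⟨0, le_rfl, h⟩, fun ⟨m, hm, h⟩ => by
        obtain rfl : m = 0 := Nat.le_zero.1 hm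
        exact h⟩
  | succ l ih =>
      rw [psiAcc_succ_fst, Finset.mem_union, ih]
      constructor
      · rintro (⟨m, hm, h⟩ | h)
        · exact ⟨m, by omega, h⟩
        · exact ⟨l+1, le_rfl, h⟩
      · rintro ⟨m, hm, h⟩
        rcases Nat.lt_or_ge m (l+1) with hlt | hge
        · exact Or.inl ⟨m, by omega, h⟩
        · obtain rfl : m = l + 1 := by omega
          exact Or.inr h

lemma gammaL_level_unique {l m : ℕ} {x : ℤ} (hl : x ∈ gammaL β γ l)
    (hm : x ∈ gammaL β γ m) : l = m := by
  have aux : ∀ a b : ℕ, a < b → x ∈ gammaL β γ a → x ∈ gammaL β γ b → False := by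
    intro a b hab ha hb
    obtain ⟨b', rfl⟩ : ∃ b', b = b' + 1 := ⟨b - 1, by omega⟩
    exact gammaL_succ_not_fst hb
      (psiAcc_fst_mono β γ (show a ≤ b' by omega) (gammaL_subset_fst a ha))
  rcases lt_trichotomy l m with h | h | h
  · exact (aux l m h hl hm).elim
  · exact h
  · exact (aux m l h hm hl).elim

lemma psiS_eq_of_mem {l : ℕ} {x : ℤ} (hx : x ∈ gammaL β γ l) :
    psiS β γ x = x - l := by
  have h : ∃ m, x ∈ gammaL β γ m := ⟨l, hx⟩
  rw [psiS, dif_pos h, gammaL_level_unique (Nat.find_spec h) hx]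

lemma psiS_shift_mem {l : ℕ} {x : ℤ} (hx : x ∈ gammaL β γ (l+1)) :
    x - ((l:ℤ)+1) ∈ (psiAcc β γ (l+1)).2 := by
  rw [psiAcc_succ_snd]
  exact Finset.mem_union_right _ (Finset.mem_image_of_mem _ hx)

lemma psiS_id {x : ℤ} (hx : x ∈ γ ∩ β) : psiS β γ x = x := by
  have h := psiS_eq_of_mem (show x ∈ gammaL β γ 0 from hx)
  simpa using h


lemma totality {n k r : ℕ} (hS : IsSymbol n k r β γ) (hstd : IsStandard β γ) :
    ∀ j ∈ γ, ∃ l, j ∈ gammaL β γ l := by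
  obtain ⟨hβI, hγI, hβc, hγc⟩ := hS
  intro j hj
  by_contra hnot
  push_neg at hnot
  have hjM : ∀ l, j ∉ (psiAcc β γ l).1 := fun l h => by
    obtain ⟨m, _, hm⟩ := mem_fst_iff.1 h
    exact hnot m hm
  have hjβ : j ∉ β := fun h => hnot 0 (Finset.mem_inter.2 ⟨hj, h⟩)
  have hfail : ∀ b ∈ β, b < j → b ∈ (psiAcc β γ ((j - b).toNat - 1)).2 := by
    intro b hb hbj
    set l' := (j - b).toNat - 1 with hl'
    have hcast : ((l' : ℤ) + 1) = j - b := by omega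
    by_contra hbI
    apply hnot (l' + 1)
    show _ ∈ Finset.filter _ _
    refine Finset.mem_filter.2 ⟨Finset.mem_sdiff.2 ⟨hj, hjM l'⟩, ?_⟩
    rw [hcast, show j - (j - b) = b by ring]
    exact Finset.mem_sdiff.2 ⟨hb, hbI⟩
  have key2 : ∀ l, ((psiAcc β γ l).2.filter (fun x => x ≤ j)).card
      ≤ ((psiAcc β γ l).1.filter (fun x => x < j)).card := by
    intro l
    induction l with
    | zero =>
        have heq : ((psiAcc β γ 0).2.filter (fun x => x ≤ j)) =
            ((psiAcc β γ 0).1.filter (fun x => x < j)) := by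
          ext x
          simp only [psiAcc, Finset.mem_filter, Finset.mem_inter]
          constructor
          · rintro ⟨⟨h1, h2⟩, h3⟩
            exact ⟨⟨h1, h2⟩, lt_of_le_of_ne h3 (fun h => hjβ (h ▸ h2))⟩
          · rintro ⟨h1, h2⟩
            exact ⟨h1, le_of_lt h2⟩
        rw [heq]
    | succ l ih =>
        have hxlt : ∀ x ∈ gammaL β γ (l+1), x - ((l:ℤ)+1) ≤ j → x < j := by
          intro x hx hxj
          have hxne : x ≠ j := fun h => hnot (l+1) (h ▸ hx)
          by_contra hc
          push_neg at hc
          obtain ⟨hbβ, hbI⟩ := Finset.mem_sdiff.1 (gammaL_succ_shift hx)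
          have hbj : x - ((l:ℤ)+1) < j := by
            rcases lt_or_eq_of_le hxj with h | h
            · exact h
            · exact absurd (h ▸ hbβ) hjβ
          have hmem := hfail _ hbβ hbj
          have hle : (j - (x - ((l:ℤ)+1))).toNat - 1 ≤ l := by omega
          exact hbI (psiAcc_snd_mono β γ hle hmem)
        have hsecond : (((gammaL β γ (l+1)).image
              (fun x => x - ((l:ℤ)+1))).filter (fun x => x ≤ j)).card
            ≤ ((gammaL β γ (l+1)).filter (fun x => x < j)).card := by
          refine le_trans (Finset.card_le_card (t := ((gammaL β γ (l+1)).filter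
            (fun x => x < j)).image (fun x => x - ((l:ℤ)+1))) ?_) Finset.card_image_le
          intro y hy
          obtain ⟨hy1, hy2⟩ := Finset.mem_filter.1 hy
          obtain ⟨x, hx, rfl⟩ := Finset.mem_image.1 hy1
          exact Finset.mem_image_of_mem _
            (Finset.mem_filter.2 ⟨hx, hxlt x hx hy2⟩)
        have hdisj : Disjoint ((psiAcc β γ l).1.filter (fun x => x < j))
            ((gammaL β γ (l+1)).filter (fun x => x < j)) := by
          rw [Finset.disjoint_left]
          intro x hx1 hx2
          exact gammaL_succ_not_fst (Finset.mem_filter.1 hx2).1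
            (Finset.mem_filter.1 hx1).1
        calc ((psiAcc β γ (l+1)).2.filter (fun x => x ≤ j)).card
            ≤ ((psiAcc β γ l).2.filter (fun x => x ≤ j)).card
              + (((gammaL β γ (l+1)).image
                  (fun x => x - ((l:ℤ)+1))).filter (fun x => x ≤ j)).card := by
              rw [psiAcc_succ_snd, Finset.filter_union]
              exact Finset.card_union_le _ _
          _ ≤ ((psiAcc β γ l).1.filter (fun x => x < j)).card
              + ((gammaL β γ (l+1)).filter (fun x => x < j)).card :=
              Nat.add_le_add ih hsecond
          _ = ((psiAcc β γ (l+1)).1.filter (fun x => x < j)).card := by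
              rw [psiAcc_succ_fst, Finset.filter_union,
                Finset.card_union_of_disjoint hdisj]
  have hβsub : β.filter (fun x => x ≤ j)
      ⊆ (psiAcc β γ j.toNat).2.filter (fun x => x ≤ j) := by
    intro b hb
    obtain ⟨hbβ, hbj⟩ := Finset.mem_filter.1 hb
    have hblt : b < j := lt_of_le_of_ne hbj (fun h => hjβ (h ▸ hbβ))
    have h1 : 1 ≤ b := (Finset.mem_Icc.1 (hβI hbβ)).1
    exact Finset.mem_filter.2 ⟨psiAcc_snd_mono β γ
      (show (j - b).toNat - 1 ≤ j.toNat by omega) (hfail b hbβ hblt), hbj⟩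
  have hγsub : (psiAcc β γ j.toNat).1.filter (fun x => x < j)
      ⊆ γ.filter (fun x => x < j) :=
    Finset.filter_subset_filter _ (fst_subset_gamma _)
  have hchain : (β.filter (fun x => x ≤ j)).card ≤ (γ.filter (fun x => x < j)).card :=
    le_trans (Finset.card_le_card hβsub)
      (le_trans (key2 _) (Finset.card_le_card hγsub))
  have hilt : (γ.filter (fun x => x < j)).card < γ.card := by
    apply Finset.card_lt_card
    rw [Finset.ssubset_iff_of_subset (Finset.filter_subset _ _)]
    exact ⟨j, hj, by simp⟩
  have hstd' := hstd _ hilt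
  rw [sort_rank hj] at hstd'
  have hfin := sort_card_le (lt_of_lt_of_le hilt (by omega : γ.card ≤ β.card)) hstd'
  omega

lemma psiS_props (htot : ∀ j ∈ γ, ∃ l, j ∈ gammaL β γ l) {x : ℤ} (hx : x ∈ γ \ β) :
    psiS β γ x ∈ β \ γ ∧ psiS β γ x < x := by
  obtain ⟨hxγ, hxβ⟩ := Finset.mem_sdiff.1 hx
  obtain ⟨l, hl⟩ := htot x hxγ
  obtain ⟨l', rfl⟩ : ∃ l', l = l' + 1 := by
    cases l with
    | zero => exact absurd (Finset.mem_inter.1 hl).2 hxβ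
    | succ l' => exact ⟨l', rfl⟩
  obtain ⟨hb, hI⟩ := Finset.mem_sdiff.1 (gammaL_succ_shift hl)
  have hψ : psiS β γ x = x - ((l' : ℤ) + 1) := by
    rw [psiS_eq_of_mem hl]; push_cast; ring
  constructor
  · rw [hψ]
    exact Finset.mem_sdiff.2 ⟨hb, fun hγ' =>
      hI (inter_subset_snd l' (Finset.mem_inter.2 ⟨hγ', hb⟩))⟩
  · rw [hψ]; omega

lemma psiS_injOn (htot : ∀ j ∈ γ, ∃ l, j ∈ gammaL β γ l) :
    ∀ x ∈ γ \ β, ∀ y ∈ γ \ β, psiS β γ x = psiS β γ y → x = y := by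
  have hlev : ∀ x ∈ γ \ β, ∃ l, x ∈ gammaL β γ (l+1) := by
    intro x hx
    obtain ⟨hxγ, hxβ⟩ := Finset.mem_sdiff.1 hx
    obtain ⟨l, hl⟩ := htot x hxγ
    cases l with
    | zero => exact absurd (Finset.mem_inter.1 hl).2 hxβ
    | succ l' => exact ⟨l', hl⟩
  have aux : ∀ lx ly : ℕ, ∀ x y : ℤ, lx < ly → x ∈ gammaL β γ (lx+1) →
      y ∈ gammaL β γ (ly+1) → psiS β γ x = psiS β γ y → False := by
    intro lx ly x y hlt hx hy heq
    have h1 : psiS β γ x ∈ (psiAcc β γ ly).2 := by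
      have : psiS β γ x = x - ((lx : ℤ) + 1) := by
        rw [psiS_eq_of_mem hx]; push_cast; ring
      rw [this]
      exact psiAcc_snd_mono β γ (show lx + 1 ≤ ly by omega) (psiS_shift_mem hx)
    have h2 : psiS β γ y = y - ((ly : ℤ) + 1) := by
      rw [psiS_eq_of_mem hy]; push_cast; ring
    rw [heq, h2] at h1
    exact (Finset.mem_sdiff.1 (gammaL_succ_shift hy)).2 h1
  intro x hx y hy heq
  obtain ⟨lx, hlx⟩ := hlev x hx
  obtain ⟨ly, hly⟩ := hlev y hy
  rcases lt_trichotomy lx ly with h | h | h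
  · exact (aux lx ly x y h hlx hly heq).elim
  · subst h
    rw [psiS_eq_of_mem hlx, psiS_eq_of_mem hly] at heq
    omega
  · exact (aux ly lx y x h hly hlx heq.symm).elim

lemma pairs_eq (htot : ∀ j ∈ γ, ∃ l, j ∈ gammaL β γ l) :
    pairsS β γ = (γ \ β).image (fun j => (j, psiS β γ j)) := by
  unfold pairsS
  congr 1
  ext x
  simp only [Finset.mem_filter, Finset.mem_sdiff]
  constructor
  · rintro ⟨hxγ, hne⟩
    exact ⟨hxγ, fun hxβ => hne (psiS_id (Finset.mem_inter.2 ⟨hxγ, hxβ⟩))⟩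
  · rintro ⟨hxγ, hxβ⟩
    refine ⟨hxγ, fun h => ?_⟩
    have := (psiS_props htot (Finset.mem_sdiff.2 ⟨hxγ, hxβ⟩)).2
    omega

/-- for a standard symbol `S` with associated involution `ι` of `Z(S)`
(nontrivial orbits = pairs of `S`), `C(S)` is exactly the set of symbols
`Σ ∈ Sy(n,k,r)` with the same intersection of rows, the same `Z`, and such that each
nontrivial orbit of `ι` has one member in each row of `Σ`. -/
theorem statement9 (n k r : ℕ) (hn : 2 ≤ n) (hk : 1 ≤ k) (hkr : k + r ≤ n)
    (β γ : Finset ℤ) (hS : IsSymbol n k r β γ) (hstd : IsStandard β γ) :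
    (CSet β γ : Set (Finset ℤ × Finset ℤ)) =
      { p : Finset ℤ × Finset ℤ |
        IsSymbol n k r p.1 p.2 ∧ p.1 ∩ p.2 = β ∩ γ ∧
        (p.1 ∪ p.2) \ (p.1 ∩ p.2) = (β ∪ γ) \ (β ∩ γ) ∧
        ∀ q ∈ pairsS β γ, (q.1 ∈ p.1 ∧ q.2 ∈ p.2) ∨ (q.1 ∈ p.2 ∧ q.2 ∈ p.1) } := by
  have htot := totality hS hstd
  obtain ⟨hβI, hγI, hβc, hγc⟩ := hS
  have hψmem : ∀ x ∈ γ \ β, psiS β γ x ∈ β \ γ := fun x hx => (psiS_props htot hx).1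
  have hinj := psiS_injOn htot
  have hpairs := pairs_eq htot
  have hmemC : ∀ p : Finset ℤ × Finset ℤ, p ∈ CSet β γ ↔
      ∃ A, A ⊆ γ \ β ∧
        p = ((β \ A.image (psiS β γ)) ∪ A, (γ \ A) ∪ A.image (psiS β γ)) := by
    intro p
    constructor
    · intro hp
      obtain ⟨T, hT, rfl⟩ := Finset.mem_image.1 hp
      rw [Finset.mem_powerset, hpairs] at hT
      refine ⟨T.image Prod.fst, ?_, ?_⟩
      · intro x hx
        obtain ⟨q, hq, rfl⟩ := Finset.mem_image.1 hx
        obtain ⟨j2, hj2, hq2⟩ := Finset.mem_image.1 (hT hq)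
        rw [← hq2]
        exact hj2
      · have hTA : T = (T.image Prod.fst).image (fun j => (j, psiS β γ j)) := by
          ext q
          constructor
          · intro hq
            obtain ⟨j2, hj2, hq2⟩ := Finset.mem_image.1 (hT hq)
            have hfst : q.1 = j2 := by rw [← hq2]
            refine Finset.mem_image.2 ⟨q.1, Finset.mem_image.2 ⟨q, hq, rfl⟩, ?_⟩
            rw [hfst]
            exact hq2
          · intro hq
            obtain ⟨jj, hjj, rfl⟩ := Finset.mem_image.1 hq
            obtain ⟨q', hq', rfl⟩ := Finset.mem_image.1 hjj
            obtain ⟨j2, hj2, hq2⟩ := Finset.mem_image.1 (hT hq')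
            have hfst : q'.1 = j2 := by rw [← hq2]
            have hqq : (q'.1, psiS β γ q'.1) = q' := by rw [hfst]; exact hq2
            rw [hqq]
            exact hq'
        conv_lhs => rw [hTA]
        simp [swapSymbol, Finset.image_image, Function.comp_def]
    · rintro ⟨A, hA, rfl⟩
      refine Finset.mem_image.2 ⟨A.image (fun j => (j, psiS β γ j)), ?_, ?_⟩
      · rw [Finset.mem_powerset, hpairs]
        exact Finset.image_subset_image hA
      · simp [swapSymbol, Finset.image_image, Function.comp_def]
  ext p
  simp only [Finset.mem_coe, Set.mem_setOf_eq, hmemC]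
  constructor
  · rintro ⟨A, hA, rfl⟩
    dsimp only
    have hAγβ : ∀ x ∈ A, x ∈ γ ∧ x ∉ β := fun x hx => Finset.mem_sdiff.1 (hA hx)
    have hAψβγ : ∀ x ∈ A.image (psiS β γ), x ∈ β ∧ x ∉ γ := by
      intro x hx
      obtain ⟨y, hy, rfl⟩ := Finset.mem_image.1 hx
      exact Finset.mem_sdiff.1 (hψmem y (hA hy))
    have hcardAψ : (A.image (psiS β γ)).card = A.card :=
      Finset.card_image_of_injOn (fun x hx y hy h => hinj x (hA hx) y (hA hy) h)
    have hAψβ : A.image (psiS β γ) ⊆ β := fun x hx => (hAψβγ x hx).1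
    have hAγ : A ⊆ γ := fun x hx => (hAγβ x hx).1
    have hAcard : A.card ≤ β.card := hcardAψ ▸ Finset.card_le_card hAψβ
    have hAcard2 : A.card ≤ γ.card := Finset.card_le_card hAγ
    have hinter : ((β \ A.image (psiS β γ)) ∪ A) ∩ ((γ \ A) ∪ A.image (psiS β γ))
        = β ∩ γ := by
      ext x
      simp only [Finset.mem_inter, Finset.mem_union, Finset.mem_sdiff]
      have h1 := hAγβ x
      have h2 := hAψβγ x
      tauto
    have hun : ((β \ A.image (psiS β γ)) ∪ A) ∪ ((γ \ A) ∪ A.image (psiS β γ))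
        = β ∪ γ := by
      ext x
      simp only [Finset.mem_union, Finset.mem_sdiff]
      have h1 := hAγβ x
      have h2 := hAψβγ x
      tauto
    have hd1 : Disjoint (β \ A.image (psiS β γ)) A := Finset.disjoint_left.2
      (fun x hx hxA => (hAγβ x hxA).2 (Finset.mem_sdiff.1 hx).1)
    have hd2 : Disjoint (γ \ A) (A.image (psiS β γ)) := Finset.disjoint_left.2
      (fun x hx hxA => (hAψβγ x hxA).2 (Finset.mem_sdiff.1 hx).1)
    refine ⟨⟨?_, ?_, ?_, ?_⟩, hinter, ?_, ?_⟩
    · exact Finset.union_subset (Finset.sdiff_subset.trans hβI) (hAγ.trans hγI)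
    · exact Finset.union_subset (Finset.sdiff_subset.trans hγI) (hAψβ.trans hβI)
    · rw [Finset.card_union_of_disjoint hd1, Finset.card_sdiff_of_subset hAψβ, hcardAψ]
      omega
    · rw [Finset.card_union_of_disjoint hd2, Finset.card_sdiff_of_subset hAγ, hcardAψ]
      omega
    · rw [hinter, hun]
    · intro q hq
      rw [hpairs] at hq
      obtain ⟨jj, hjj, rfl⟩ := Finset.mem_image.1 hq
      dsimp only
      by_cases hjA : jj ∈ A
      · exact Or.inl ⟨Finset.mem_union_right _ hjA,
          Finset.mem_union_right _ (Finset.mem_image_of_mem _ hjA)⟩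
      · refine Or.inr ⟨Finset.mem_union_left _ (Finset.mem_sdiff.2
          ⟨(Finset.mem_sdiff.1 hjj).1, hjA⟩), Finset.mem_union_left _ ?_⟩
        refine Finset.mem_sdiff.2 ⟨(Finset.mem_sdiff.1 (hψmem jj hjj)).1, fun hx => ?_⟩
        obtain ⟨y, hy, hyeq⟩ := Finset.mem_image.1 hx
        exact hjA ((hinj y (hA hy) jj hjj hyeq) ▸ hy)
  · rintro ⟨⟨hp1I, hp2I, hp1c, hp2c⟩, hint, hZ, hpair⟩
    set A := (γ \ β).filter (fun x => x ∈ p.1) with hAdef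
    have hA : A ⊆ γ \ β := Finset.filter_subset _ _
    have hmemA : ∀ x, x ∈ A ↔ (x ∈ γ \ β ∧ x ∈ p.1) := by
      intro x
      rw [hAdef, Finset.mem_filter]
    have hBG : p.1 ∪ p.2 = β ∪ γ := by
      have e1 : ∀ s t : Finset ℤ, s ∪ t = ((s ∪ t) \ (s ∩ t)) ∪ (s ∩ t) := by
        intro s t
        ext x
        simp only [Finset.mem_union, Finset.mem_sdiff, Finset.mem_inter]
        tauto
      calc p.1 ∪ p.2 = ((p.1 ∪ p.2) \ (p.1 ∩ p.2)) ∪ (p.1 ∩ p.2) := e1 _ _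
        _ = ((β ∪ γ) \ (β ∩ γ)) ∪ (β ∩ γ) := by rw [hZ, hint]
        _ = β ∪ γ := (e1 _ _).symm
    have hone : ∀ x, x ∈ β ∪ γ → x ∉ β ∩ γ →
        ((x ∈ p.1 ∧ x ∉ p.2) ∨ (x ∈ p.2 ∧ x ∉ p.1)) := by
      intro x h1 h2
      have hx : x ∈ p.1 ∪ p.2 := by rw [hBG]; exact h1
      have hx2 : x ∉ p.1 ∩ p.2 := by rw [hint]; exact h2
      rw [Finset.mem_union] at hx
      rw [Finset.mem_inter] at hx2
      tauto
    have hXG : β ∩ γ ⊆ p.2 := by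
      rw [← hint]; exact Finset.inter_subset_right
    have hXB : β ∩ γ ⊆ p.1 := by
      rw [← hint]; exact Finset.inter_subset_left
    have hkey : ∀ jj ∈ γ \ β,
        (jj ∈ p.1 ∧ jj ∉ p.2 ∧ psiS β γ jj ∈ p.2 ∧ psiS β γ jj ∉ p.1) ∨
        (jj ∈ p.2 ∧ jj ∉ p.1 ∧ psiS β γ jj ∈ p.1 ∧ psiS β γ jj ∉ p.2) := by
      intro jj hjj
      obtain ⟨hjγ, hjβ⟩ := Finset.mem_sdiff.1 hjj
      obtain ⟨hψβ, hψγ⟩ := Finset.mem_sdiff.1 (hψmem jj hjj)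
      have h1 := hone jj (Finset.mem_union_right _ hjγ)
        (fun h => hjβ (Finset.mem_inter.1 h).1)
      have h2 := hone (psiS β γ jj) (Finset.mem_union_left _ hψβ)
        (fun h => hψγ (Finset.mem_inter.1 h).2)
      have h3 := hpair (jj, psiS β γ jj)
        (by rw [hpairs]; exact Finset.mem_image_of_mem _ hjj)
      dsimp only at h3
      tauto
    have hAψG : ∀ x ∈ A.image (psiS β γ), x ∈ p.2 := by
      intro x hx
      obtain ⟨y, hy, rfl⟩ := Finset.mem_image.1 hx
      have hy' := (hmemA y).1 hy
      rcases hkey y hy'.1 with h | h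
      · exact h.2.2.1
      · exact absurd hy'.2 h.2.1
    have hGsub : (γ \ A) ∪ A.image (psiS β γ) ⊆ p.2 := by
      refine Finset.union_subset ?_ (fun x hx => hAψG x hx)
      intro x hx
      obtain ⟨hxγ, hxA⟩ := Finset.mem_sdiff.1 hx
      by_cases hxβ : x ∈ β
      · exact hXG (Finset.mem_inter.2 ⟨hxβ, hxγ⟩)
      · have hxP1 : x ∈ γ \ β := Finset.mem_sdiff.2 ⟨hxγ, hxβ⟩
        have hxB : x ∉ p.1 := fun hB => hxA ((hmemA x).2 ⟨hxP1, hB⟩)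
        rcases hkey x hxP1 with h | h
        · exact absurd h.1 hxB
        · exact h.1
    have hAγ : A ⊆ γ := fun x hx => (Finset.mem_sdiff.1 (hA hx)).1
    have hcardAψ : (A.image (psiS β γ)).card = A.card :=
      Finset.card_image_of_injOn (fun x hx y hy h => hinj x (hA hx) y (hA hy) h)
    have hdisj : Disjoint (γ \ A) (A.image (psiS β γ)) := by
      rw [Finset.disjoint_left]
      intro x hx hx2
      obtain ⟨y, hy, rfl⟩ := Finset.mem_image.1 hx2
      exact (Finset.mem_sdiff.1 (hψmem y (hA hy))).2 (Finset.mem_sdiff.1 hx).1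
    have hcards : ((γ \ A) ∪ A.image (psiS β γ)).card = p.2.card := by
      rw [Finset.card_union_of_disjoint hdisj, Finset.card_sdiff_of_subset hAγ, hcardAψ,
        hp2c, hγc]
      have := Finset.card_le_card hAγ
      omega
    have hGeq : p.2 = (γ \ A) ∪ A.image (psiS β γ) :=
      (Finset.eq_of_subset_of_card_le hGsub hcards.ge).symm
    have hBsubβγ : ∀ x ∈ p.1, x ∈ β ∪ γ := by
      intro x hx
      rw [← hBG]
      exact Finset.mem_union_left _ hx
    have hBeq : p.1 = (β \ A.image (psiS β γ)) ∪ A := by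
      ext x
      rw [Finset.mem_union, Finset.mem_sdiff]
      constructor
      · intro hxB
        by_cases hxγ : x ∈ γ
        · by_cases hxβ : x ∈ β
          · refine Or.inl ⟨hxβ, fun hx2 => ?_⟩
            obtain ⟨y, hy, rfl⟩ := Finset.mem_image.1 hx2
            exact (Finset.mem_sdiff.1 (hψmem y (hA hy))).2 hxγ
          · exact Or.inr ((hmemA x).2 ⟨Finset.mem_sdiff.2 ⟨hxγ, hxβ⟩, hxB⟩)
        · have hxβ : x ∈ β := by
            rcases Finset.mem_union.1 (hBsubβγ x hxB) with h | h
            · exact h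
            · exact absurd h hxγ
          refine Or.inl ⟨hxβ, fun hx2 => ?_⟩
          have hxG : x ∈ p.2 := hAψG x hx2
          have hxX : x ∈ β ∩ γ := by
            rw [← hint]
            exact Finset.mem_inter.2 ⟨hxB, hxG⟩
          exact hxγ (Finset.mem_inter.1 hxX).2
      · intro hx
        rcases hx with ⟨hxβ, hxAψ⟩ | hxA
        · by_cases hxγ : x ∈ γ
          · exact hXB (Finset.mem_inter.2 ⟨hxβ, hxγ⟩)
          · have hxX : x ∉ β ∩ γ := fun h => hxγ (Finset.mem_inter.1 h).2
            rcases hone x (Finset.mem_union_left _ hxβ) hxX with h | h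
            · exact h.1
            · exfalso
              rw [hGeq] at h
              rcases Finset.mem_union.1 h.1 with h' | h'
              · exact hxγ (Finset.mem_sdiff.1 h').1
              · exact hxAψ h'
        · exact ((hmemA x).1 hxA).2
    exact ⟨A, hA, Prod.ext hBeq hGeq⟩

end LM2003
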